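/- Let κ : 𝕋² → 𝕋² be continuous, let n ≥ 1 be an integer, and suppose the set F = {x ∈ 𝕋² : κ^[n] x = x} of n-periodic points satisfies μ(F) = 0. Then for every ε₀ > 0 there exist M ∈ ℕ and open sets D₀, D₁, …, D_M ⊆ 𝕋² such that 𝕋² = D₀ ∪ D₁ ∪ … ∪ D_M, F ⊆ D₀, μ(D₀) ≤ ε₀, and for each i = 1, …, M the image of D_i under κ^[n] is disjoint from D_i: κ^[n](D_i) ∩ D_i = ∅. -/
import Mathlib


open MeasureTheory
open scoped ENNReal

/-- The 2-torus `(ℝ/ℤ)²`. -/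
abbrev Torus2 : Type := AddCircle (1 : ℝ) × AddCircle (1 : ℝ)

/-- If the set `F` of `n`-periodic points of a continuous map `κ` of the torus is null,
then for every `ε₀ > 0` the torus can be covered by finitely many open sets
`D₀, D₁, …, D_M` such that `F ⊆ D₀`, `μ(D₀) ≤ ε₀`, and `κⁿ(Dᵢ) ∩ Dᵢ = ∅` for
`i = 1, …, M`. -/
theorem exists_open_cover_avoiding_periodic_points
    (κ : Torus2 → Torus2) (hκ : Continuous κ) (n : ℕ) (hn : 1 ≤ n)
    (hF : (volume : Measure Torus2) {x : Torus2 | κ^[n] x = x} = 0) :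
    ∀ ε₀ : ℝ≥0∞, 0 < ε₀ →
      ∃ (M : ℕ) (D : ℕ → Set Torus2),
        (∀ i ≤ M, IsOpen (D i)) ∧
        (⋃ i ≤ M, D i) = Set.univ ∧
        {x : Torus2 | κ^[n] x = x} ⊆ D 0 ∧
        (volume : Measure Torus2) (D 0) ≤ ε₀ ∧
        ∀ i, 1 ≤ i → i ≤ M → (κ^[n] '' D i) ∩ D i = ∅ := by
  intro ε₀ hε
  have hf : Continuous (κ^[n]) := hκ.iterate n
  obtain ⟨U, hFU, hUopen, hUlt⟩ :=
    Set.exists_isOpen_lt_of_lt {x : Torus2 | κ^[n] x = x} ε₀ (by rw [hF]; exact hε)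
  have sep : ∀ x : Torus2, ∃ V : Set Torus2,
      IsOpen V ∧ (κ^[n] x ≠ x → x ∈ V) ∧ (κ^[n] '' V) ∩ V = ∅ := by
    intro x
    by_cases hx : κ^[n] x = x
    · exact ⟨∅, isOpen_empty, fun h => absurd hx h, by simp⟩
    · obtain ⟨A, B, hA, hB, hfA, hxB, hAB⟩ := t2_separation hx
      refine ⟨B ∩ κ^[n] ⁻¹' A, hB.inter (hA.preimage hf), fun _ => ⟨hxB, hfA⟩, ?_⟩
      rw [Set.eq_empty_iff_forall_notMem]
      rintro y ⟨⟨z, hz, rfl⟩, hy⟩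
      exact Set.disjoint_left.mp hAB hz.2 hy.1
  choose V hVo hVm hVd using sep
  have hK : IsCompact Uᶜ := hUopen.isClosed_compl.isCompact
  obtain ⟨t, _, htcov⟩ := hK.elim_nhds_subcover V
    (fun x hx => (hVo x).mem_nhds (hVm x (fun h => hx (hFU h))))
  set l := t.toList with hl
  refine ⟨l.length, fun i => if i = 0 then U else V (l.getD (i - 1) 0), ?_, ?_, ?_, ?_, ?_⟩
  · intro i _
    by_cases h : i = 0 <;> simp [h, hUopen, hVo]
  · rw [Set.eq_univ_iff_forall]
    intro z
    by_cases hz : z ∈ U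
    · exact Set.mem_biUnion (Nat.zero_le _) (by simpa using hz)
    · have := htcov hz
      simp only [Set.mem_iUnion] at this
      obtain ⟨x, hxt, hxz⟩ := this
      have hxl : x ∈ l := Finset.mem_toList.mpr hxt
      obtain ⟨j, hj, hget⟩ := List.mem_iff_getElem.mp hxl
      have : z ∈ (if j + 1 = 0 then U else V (l.getD (j + 1 - 1) 0)) := by
        simp only [Nat.add_sub_cancel, if_neg (Nat.succ_ne_zero j)]
        rw [List.getD_eq_getElem l 0 hj, hget]
        exact hxz
      exact Set.mem_biUnion hj this
  · simpa using hFU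
  · simpa using hUlt.le
  · intro i hi _
    simp only [if_neg (by omega : i ≠ 0)]
    exact hVd _
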